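/- Let X₁, …, Xₙ be i.i.d. real-valued random variables with common distribution D having CDF F, let α ∈ (0,1), Δ > 0 with α + Δ < 1, and β ∈ (0,1). Define the population quantile q_τ := inf{x : F(x) ≥ τ} and the empirical quantile q̂_α := inf{x : #{i : Xᵢ ≤ x} ≥ α·n}. If n ≥ (1/(2Δ²))·log(1/β), then Pr( q̂_α > q_{α+Δ} ) ≤ β. -/

import Mathlib

open MeasureTheory ProbabilityTheory Filter

/-- The CDF of a distribution `D` on `ℝ`. -/
noncomputable def distCdf (D : Measure ℝ) (x : ℝ) : ℝ := (D (Set.Iic x)).toReal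

/-- The population `τ`-quantile `q_τ := inf {x : F(x) ≥ τ}`. -/
noncomputable def popQuantile (D : Measure ℝ) (τ : ℝ) : ℝ :=
  sInf {x : ℝ | τ ≤ distCdf D x}

/-- The empirical `γ`-quantile `q̂_γ := inf {x : #{i : Xᵢ ≤ x} ≥ γ·n}`. -/
noncomputable def empQuantile {n : ℕ} (X : Fin n → ℝ) (γ : ℝ) : ℝ :=
  sInf {x : ℝ | γ * (n : ℝ) ≤ ((Finset.univ.filter (fun i => X i ≤ x)).card : ℝ)}

lemma bernoulli_mgf_le {p : ℝ} (hp0 : 0 ≤ p) (hp1 : p ≤ 1) {s : ℝ} (hs : s ≤ 0) :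
    p * Real.exp s + (1 - p) ≤ Real.exp (p * s + s ^ 2 / 8) := by
  set w : ℝ → ℝ := fun x => p * Real.exp x + (1 - p) with hw_def
  have hw : ∀ x, 0 < w x := by
    intro x
    rcases eq_or_lt_of_le hp0 with h | h
    · simp [hw_def, ← h]
    · rcases eq_or_lt_of_le hp1 with h1 | h1
      · simp [hw_def, h1]
        positivity
      · have : 0 < p * Real.exp x := by positivity
        have : 0 < 1 - p := by linarith
        simp only [hw_def]
        positivity
  set g' : ℝ → ℝ := fun x => p + x / 4 - p * Real.exp x / w x with hg'_def
  set g : ℝ → ℝ := fun x => p * x + x ^ 2 / 8 - Real.log (w x) with hg_def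
  have hwderiv : ∀ x, HasDerivAt w (p * Real.exp x) x := by
    intro x
    exact ((Real.hasDerivAt_exp x).const_mul p).add_const (1 - p)
  have hgderiv : ∀ x, HasDerivAt g (g' x) x := by
    intro x
    have h1 : HasDerivAt (fun y : ℝ => p * y) p x := by
      simpa using (hasDerivAt_id x).const_mul p
    have h2 : HasDerivAt (fun y : ℝ => y ^ 2 / 8) (x / 4) x := by
      have := (hasDerivAt_pow 2 x).div_const 8
      simpa using this.congr_deriv (by ring)
    have h3 : HasDerivAt (fun y => Real.log (w y)) (p * Real.exp x / w x) x :=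
      (hwderiv x).log (hw x).ne'
    exact (h1.add h2).sub h3
  have hg'deriv : ∀ x, HasDerivAt g'
      (1 / 4 - (p * Real.exp x * w x - p * Real.exp x * (p * Real.exp x)) / (w x) ^ 2) x := by
    intro x
    have h1 : HasDerivAt (fun y : ℝ => p + y / 4) (1 / 4) x := by
      simpa using (hasDerivAt_id x).div_const 4 |>.const_add p
    have h2 : HasDerivAt (fun y => p * Real.exp y / w y)
        ((p * Real.exp x * w x - p * Real.exp x * (p * Real.exp x)) / (w x) ^ 2) x :=
      ((Real.hasDerivAt_exp x).const_mul p).div (hwderiv x) (hw x).ne'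
    exact h1.sub h2
  have hg'mono : Monotone g' := by
    apply monotone_of_deriv_nonneg
    · exact fun x => (hg'deriv x).differentiableAt
    · intro x
      rw [(hg'deriv x).deriv]
      have hab : 0 ≤ p * Real.exp x := by positivity
      have hb : 0 ≤ 1 - p := by linarith
      have key : p * Real.exp x * w x - p * Real.exp x * (p * Real.exp x)
          = (p * Real.exp x) * (1 - p) := by simp only [hw_def]; ring
      rw [key]
      rw [sub_nonneg, div_le_iff₀ (pow_pos (hw x) 2)]
      have hwx : w x = p * Real.exp x + (1 - p) := rfl
      nlinarith [sq_nonneg (p * Real.exp x - (1 - p))]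
  have hg'0 : g' 0 = 0 := by
    simp [hg'_def, hw_def]
  have hganti : AntitoneOn g (Set.Iic 0) := by
    apply antitoneOn_of_deriv_nonpos (convex_Iic 0)
    · exact fun x _ => ((hgderiv x).differentiableAt).continuousAt.continuousWithinAt
    · exact fun x _ => ((hgderiv x).differentiableAt).differentiableWithinAt
    · intro x hx
      rw [interior_Iic] at hx
      rw [(hgderiv x).deriv]
      have := hg'mono (le_of_lt hx)
      rw [hg'0] at this
      exact this
  have hg0 : g 0 = 0 := by simp [hg_def, hw_def]
  have hgs : 0 ≤ g s := by
    have := hganti (Set.mem_Iic.2 hs) (Set.mem_Iic.2 le_rfl) hs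
    rwa [hg0] at this
  have hlog : Real.log (w s) ≤ p * s + s ^ 2 / 8 := by
    simp only [hg_def] at hgs; linarith
  calc w s = Real.exp (Real.log (w s)) := (Real.exp_log (hw s)).symm
    _ ≤ Real.exp (p * s + s ^ 2 / 8) := Real.exp_le_exp.mpr hlog

theorem empirical_quantile_upper_shift
    {Ω : Type*} [MeasurableSpace Ω] (μ : Measure Ω) [IsProbabilityMeasure μ]
    (n : ℕ) (X : Fin n → Ω → ℝ) (hmeas : ∀ i, Measurable (X i))
    (D : Measure ℝ) [IsProbabilityMeasure D]
    (hindep : iIndepFun X μ)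
    (hid : ∀ i, Measure.map (X i) μ = D)
    (α Δ β : ℝ) (hα : α ∈ Set.Ioo (0 : ℝ) 1) (hΔ : 0 < Δ) (hαΔ : α + Δ < 1)
    (hβ : β ∈ Set.Ioo (0 : ℝ) 1)
    (hn : (n : ℝ) ≥ (1 / (2 * Δ ^ 2)) * Real.log (1 / β)) :
    μ {ω | popQuantile D (α + Δ) < empQuantile (fun i => X i ω) α}
      ≤ ENNReal.ofReal β := by
  obtain ⟨hα0, hα1⟩ := hα
  obtain ⟨hβ0, hβ1⟩ := hβ
  have hlogβ : 0 < Real.log (1 / β) := Real.log_pos (by rw [lt_div_iff₀ hβ0]; linarith)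
  have hnpos : 0 < (n : ℝ) := lt_of_lt_of_le (by positivity) hn
  have hn0 : 0 < n := by exact_mod_cast hnpos
  set τ : ℝ := α + Δ with hτ_def
  have hτ0 : 0 < τ := by positivity
  set q : ℝ := popQuantile D τ with hq_def
  have hFmono : Monotone (distCdf D) := fun a b hab =>
    ENNReal.toReal_mono (measure_ne_top _ _) (measure_mono (Set.Iic_subset_Iic.2 hab))
  set S : Set ℝ := {x : ℝ | τ ≤ distCdf D x} with hS_def
  -- S is nonempty
  have hSne : S.Nonempty := by
    have h1 : ENNReal.ofReal τ < D Set.univ := by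
      rw [measure_univ]
      exact ENNReal.ofReal_lt_one.2 hαΔ
    obtain ⟨x, hx⟩ := ((tendsto_measure_Iic_atTop D).eventually_const_lt h1).exists
    exact ⟨x, (ENNReal.ofReal_le_iff_le_toReal (measure_ne_top _ _)).1 hx.le⟩
  -- S is bounded below
  have hSbd : BddBelow S := by
    have h0 : Tendsto (fun k : ℕ => D (Set.Iic (-(k : ℝ)))) atTop (nhds 0) := by
      have h := tendsto_measure_iInter_atTop (μ := D)
        (fun k : ℕ => measurableSet_Iic.nullMeasurableSet)
        (fun a b hab => Set.Iic_subset_Iic.2 (neg_le_neg (Nat.cast_le.2 hab)))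
        ⟨0, measure_ne_top D _⟩
      have he : ⋂ k : ℕ, Set.Iic (-(k : ℝ)) = ∅ := by
        ext y
        simp only [Set.mem_iInter, Set.mem_Iic, Set.mem_empty_iff_false, iff_false]
        push_neg
        obtain ⟨k, hk⟩ := exists_nat_gt (-y)
        exact ⟨k, by linarith⟩
      rw [he] at h
      rw [measure_empty] at h
      exact h
    have h1 : (0 : ENNReal) < ENNReal.ofReal τ := ENNReal.ofReal_pos.2 hτ0
    obtain ⟨k, hk⟩ := (h0.eventually_lt_const h1).exists
    set x : ℝ := -(k : ℝ) with hx_def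
    have hx : D (Set.Iic x) < ENNReal.ofReal τ := hk
    refine ⟨x, fun y hy => ?_⟩
    by_contra hxy
    push_neg at hxy
    have : τ ≤ distCdf D x := le_trans hy (hFmono hxy.le)
    have : ENNReal.ofReal τ ≤ D (Set.Iic x) :=
      (ENNReal.ofReal_le_iff_le_toReal (measure_ne_top _ _)).2 this
    exact absurd hx (not_lt.2 this)
  -- τ ≤ F q
  have hpτ : τ ≤ distCdf D q := by
    have hup : ∀ x, q < x → τ ≤ distCdf D x := by
      intro x hx
      obtain ⟨s, hsS, hs⟩ := exists_lt_of_csInf_lt hSne hx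
      exact le_trans hsS (hFmono hs.le)
    set u : ℕ → ℝ := fun k => q + 1 / (k + 1) with hu_def
    have hupos : ∀ k : ℕ, q < u k := by
      intro k
      have : (0 : ℝ) < 1 / ((k : ℝ) + 1) := by positivity
      simp only [hu_def]; linarith
    have huanti : Antitone u := by
      intro a b hab
      have h1 : ((a : ℝ) + 1) ≤ ((b : ℝ) + 1) := by
        have : (a : ℝ) ≤ b := by exact_mod_cast hab
        linarith
      have := one_div_le_one_div_of_le (by positivity : (0:ℝ) < (a:ℝ)+1) h1
      simp only [hu_def]; linarith
    have hutend : Tendsto u atTop (nhds q) := by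
      have := tendsto_one_div_add_atTop_nhds_zero_nat (𝕜 := ℝ)
      have h2 := Filter.Tendsto.const_add q this
      simpa [hu_def] using h2
    have hiInter : ⋂ k, Set.Iic (u k) = Set.Iic q := by
      ext y
      simp only [Set.mem_iInter, Set.mem_Iic]
      constructor
      · intro h
        exact ge_of_tendsto hutend (Filter.Eventually.of_forall h)
      · intro h k
        exact le_trans h (hupos k).le
    have htendD : Tendsto (fun k => D (Set.Iic (u k))) atTop (nhds (D (Set.Iic q))) := by
      have := tendsto_measure_iInter_atTop (μ := D)
        (fun k => measurableSet_Iic.nullMeasurableSet)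
        (fun a b hab => Set.Iic_subset_Iic.2 (huanti hab))
        ⟨0, measure_ne_top D _⟩
      rw [hiInter] at this
      exact this
    have hk : ∀ k, ENNReal.ofReal τ ≤ D (Set.Iic (u k)) := fun k =>
      (ENNReal.ofReal_le_iff_le_toReal (measure_ne_top _ _)).2 (hup (u k) (hupos k))
    have : ENNReal.ofReal τ ≤ D (Set.Iic q) :=
      ge_of_tendsto htendD (Filter.Eventually.of_forall hk)
    exact (ENNReal.ofReal_le_iff_le_toReal (measure_ne_top _ _)).1 this
  set p : ℝ := distCdf D q with hp_def
  have hp0 : 0 ≤ p := ENNReal.toReal_nonneg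
  have hp1 : p ≤ 1 := by
    have := prob_le_one (μ := D) (s := Set.Iic q)
    rw [hp_def, distCdf]
    exact ENNReal.toReal_le_of_le_ofReal one_pos.le (by simpa using this)
  -- indicator variables
  set φ : ℝ → ℝ := fun x => if x ≤ q then (-1 : ℝ) else 0 with hφ_def
  have hφmeas : Measurable φ := Measurable.ite measurableSet_Iic measurable_const measurable_const
  set Y : Fin n → Ω → ℝ := fun i => φ ∘ X i with hY_def
  have hYmeas : ∀ i, Measurable (Y i) := fun i => hφmeas.comp (hmeas i)
  have hYindep : iIndepFun Y μ :=
    hindep.comp (fun _ => φ) (fun _ => hφmeas)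
  set t : ℝ := 4 * Δ with ht_def
  have ht : 0 ≤ t := by positivity
  -- event inclusion
  have hsub : {ω | popQuantile D (α + Δ) < empQuantile (fun i => X i ω) α}
      ⊆ {ω | -(α * n) ≤ (∑ i, Y i) ω} := by
    intro ω hω
    simp only [Set.mem_setOf_eq] at hω ⊢
    have hcard : ((Finset.univ.filter (fun i => X i ω ≤ q)).card : ℝ) < α * n := by
      by_contra h
      push_neg at h
      have hbdd : BddBelow {x : ℝ | α * (n : ℝ) ≤
          ((Finset.univ.filter (fun i => X i ω ≤ x)).card : ℝ)} := by
        refine ⟨Finset.univ.inf' (Finset.univ_nonempty_iff.2 ⟨⟨0, hn0⟩⟩) (fun i => X i ω),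
          fun x hx => ?_⟩
        have hαn : (0 : ℝ) < α * n := by positivity
        have hcpos : (0 : ℝ) < ((Finset.univ.filter (fun i => X i ω ≤ x)).card : ℝ) :=
          lt_of_lt_of_le hαn hx
        have : (Finset.univ.filter (fun i => X i ω ≤ x)).Nonempty :=
          Finset.card_pos.1 (by exact_mod_cast hcpos)
        obtain ⟨i, hi⟩ := this
        rw [Finset.mem_filter] at hi
        exact le_trans (Finset.inf'_le _ (Finset.mem_univ i)) hi.2
      have hqmem : q ∈ {x : ℝ | α * (n : ℝ) ≤
          ((Finset.univ.filter (fun i => X i ω ≤ x)).card : ℝ)} := h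
      have := csInf_le hbdd hqmem
      rw [empQuantile] at hω
      exact absurd this (not_le.2 hω)
    have hsum : (∑ i, Y i) ω
        = -(((Finset.univ.filter (fun i => X i ω ≤ q)).card : ℝ)) := by
      rw [Finset.sum_apply]
      have : ∀ i : Fin n, Y i ω = if X i ω ≤ q then (-1 : ℝ) else 0 := fun i => rfl
      simp_rw [this]
      rw [Finset.sum_ite, Finset.sum_const, Finset.sum_const]
      simp
    rw [hsum]
    linarith
  -- integrability & mgf of each Y i
  have hrep : ∀ i, (fun ω => Real.exp (t * Y i ω))
      = fun ω => Set.indicator ((X i) ⁻¹' Set.Iic q) (fun _ => Real.exp (-t) - 1) ω + 1 := by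
    intro i
    funext ω
    by_cases h : X i ω ≤ q
    · have : Y i ω = -1 := by simp [hY_def, hφ_def, h]
      rw [this]
      rw [Set.indicator_of_mem (by simpa using h)]
      ring_nf
    · have : Y i ω = 0 := by simp [hY_def, hφ_def, h]
      rw [this]
      rw [Set.indicator_of_notMem (by simpa using h)]
      simp
  have hint : ∀ i, Integrable (fun ω => Real.exp (t * Y i ω)) μ := by
    intro i
    rw [hrep i]
    exact ((integrable_const _).indicator (hmeas i measurableSet_Iic)).add (integrable_const 1)
  have hmgf : ∀ i, mgf (Y i) μ t = p * Real.exp (-t) + (1 - p) := by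
    intro i
    rw [mgf]
    rw [hrep i]
    rw [integral_add ((integrable_const _).indicator (hmeas i measurableSet_Iic))
      (integrable_const 1)]
    rw [integral_indicator_const _ (hmeas i measurableSet_Iic), integral_const]
    have hA : μ ((X i) ⁻¹' Set.Iic q) = D (Set.Iic q) := by
      rw [← hid i, Measure.map_apply (hmeas i) measurableSet_Iic]
    rw [measureReal_def, hA]
    rw [hp_def, distCdf]
    simp [measure_univ]
    ring
  -- Chernoff
  have hintsum : Integrable (fun ω => Real.exp (t * (∑ i, Y i) ω)) μ :=
    hYindep.integrable_exp_mul_sum hYmeas (fun i _ => hint i)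
  have hcher := measure_ge_le_exp_mul_mgf (μ := μ) (X := ∑ i, Y i) (-(α * n)) ht hintsum
  have hmgfsum : mgf (∑ i, Y i) μ t = (p * Real.exp (-t) + (1 - p)) ^ n := by
    rw [hYindep.mgf_sum hYmeas Finset.univ]
    simp [hmgf]
  -- numeric bound
  have hvnn : 0 ≤ p * Real.exp (-t) + (1 - p) := by
    have : 0 ≤ p * Real.exp (-t) := by positivity
    linarith
  have hbern : p * Real.exp (-t) + (1 - p) ≤ Real.exp (p * (-t) + (-t) ^ 2 / 8) :=
    bernoulli_mgf_le hp0 hp1 (neg_nonpos.2 ht)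
  have hfinal : (μ {ω | -(α * n) ≤ (∑ i, Y i) ω}).toReal ≤ β := by
    refine le_trans hcher ?_
    rw [hmgfsum]
    calc Real.exp (-t * -(α * n)) * (p * Real.exp (-t) + (1 - p)) ^ n
        ≤ Real.exp (-t * -(α * n)) * (Real.exp (p * (-t) + (-t) ^ 2 / 8)) ^ n := by
          gcongr
      _ = Real.exp (t * (α * n) + n * (p * (-t) + t ^ 2 / 8)) := by
          rw [← Real.exp_nat_mul, ← Real.exp_add]
          ring_nf
      _ ≤ Real.exp (-(2 * Δ ^ 2) * n) := by
          apply Real.exp_le_exp.2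
          have hkey : t * α - t * p + t ^ 2 / 8 ≤ -(2 * Δ ^ 2) := by
            have h1 : 0 ≤ Δ * (p - τ) := mul_nonneg hΔ.le (by linarith)
            rw [ht_def]
            rw [hτ_def] at h1
            nlinarith
          nlinarith [hnpos]
      _ ≤ β := by
          rw [← Real.exp_log hβ0]
          apply Real.exp_le_exp.2
          have h2 : Real.log (1 / β) = -Real.log β := by
            rw [one_div, Real.log_inv]
          have h4 : (0 : ℝ) < 2 * Δ ^ 2 := by positivity
          have h3 : Real.log (1 / β) ≤ 2 * Δ ^ 2 * (n : ℝ) := by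
            calc Real.log (1 / β)
                = (2 * Δ ^ 2) * (1 / (2 * Δ ^ 2) * Real.log (1 / β)) := by field_simp
              _ ≤ (2 * Δ ^ 2) * (n : ℝ) := by
                  exact mul_le_mul_of_nonneg_left hn h4.le
          linarith
  calc μ {ω | popQuantile D (α + Δ) < empQuantile (fun i => X i ω) α}
      ≤ μ {ω | -(α * n) ≤ (∑ i, Y i) ω} := measure_mono hsub
    _ = ENNReal.ofReal (μ {ω | -(α * n) ≤ (∑ i, Y i) ω}).toReal :=
        (ENNReal.ofReal_toReal (measure_ne_top _ _)).symm
    _ ≤ ENNReal.ofReal β := ENNReal.ofReal_le_ofReal hfinal
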